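/- The Chaplygin vector field Z has the invariant measure g^{−1} dx dM: on the open set U, Σ_{i=1}^3 [ ∂/∂x_i ( g(x)^{−1} (x × ω)_i ) + ∂/∂M_i ( g(x)^{−1} (M × ω)_i ) ] = 0 identically. -/
import Mathlib


open scoped BigOperators

noncomputable section

abbrev Pt3 : Type := (Fin 3 → ℝ) × (Fin 3 → ℝ)

/-- Euclidean scalar product on ℝ³ -/
def dot (a b : Fin 3 → ℝ) : ℝ := ∑ i, a i * b i

/-- totally antisymmetric Levi-Civita symbol on `Fin 3` -/
def eps (i j k : Fin 3) : ℝ :=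
  ((((i : ℕ) : ℝ) - ((j : ℕ) : ℝ)) * (((j : ℕ) : ℝ) - ((k : ℕ) : ℝ))
    * (((k : ℕ) : ℝ) - ((i : ℕ) : ℝ))) / 2

/-- vector cross product on ℝ³ -/
def cross (a b : Fin 3 → ℝ) : Fin 3 → ℝ := fun i => ∑ j, ∑ k, eps i j k * a j * b k

/-- partial derivative in the coordinate `x i` -/
def dx (f : Pt3 → ℝ) (i : Fin 3) (z : Pt3) : ℝ := fderiv ℝ f z (Pi.single i 1, 0)

/-- partial derivative in the coordinate `M i` (second group of coordinates) -/
def dM (f : Pt3 → ℝ) (i : Fin 3) (z : Pt3) : ℝ := fderiv ℝ f z (0, Pi.single i 1)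

/-- partial derivative of a function of `x` only -/
def dxg (g : (Fin 3 → ℝ) → ℝ) (i : Fin 3) (x : Fin 3 → ℝ) : ℝ := fderiv ℝ g x (Pi.single i 1)

/-- bracket associated with a skew-symmetric structure matrix π with
`π_{x_i x_j} = 0`, `π_{M_i x_j} = Axm i j`, `π_{M_i M_j} = Bmm i j`. -/
def piBracket (Axm Bmm : Fin 3 → Fin 3 → Pt3 → ℝ) (f h : Pt3 → ℝ) (z : Pt3) : ℝ :=
  ∑ i, ∑ j,
    (dM f i z * Axm i j z * dx h j z - dx f j z * Axm i j z * dM h i z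
      + dM f i z * Bmm i j z * dM h j z)

/-- `g(x) = √(1 - d (x, A x))` with `A = diag a` -/
def gC (a : Fin 3 → ℝ) (d : ℝ) (x : Fin 3 → ℝ) : ℝ :=
  Real.sqrt (1 - d * dot x (fun i => a i * x i))

/-- the open set `U = {1 - d (x, A x) > 0}` -/
def Uset (a : Fin 3 → ℝ) (d : ℝ) : Set Pt3 :=
  {z | 1 - d * dot z.1 (fun i => a i * z.1 i) > 0}

/-- `π_{M_i x_j} = ε_{ijk} g x_k` (summation over `k`) -/
def AxmC (a : Fin 3 → ℝ) (d : ℝ) (i j : Fin 3) (z : Pt3) : ℝ :=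
  ∑ k, eps i j k * gC a d z.1 * z.1 k

/-- `π_{M_i M_j} = ε_{ijk} ( g M_k - (d (M, A x) / g) x_k )` (summation over `k`) -/
def BmmC (a : Fin 3 → ℝ) (d : ℝ) (i j : Fin 3) (z : Pt3) : ℝ :=
  ∑ k, eps i j k * (gC a d z.1 * z.2 k
    - d * dot z.2 (fun m => a m * z.1 m) / gC a d z.1 * z.1 k)

/-- the Chaplygin bracket {·,·}_g -/
def chBracket (a : Fin 3 → ℝ) (d : ℝ) (f h : Pt3 → ℝ) (z : Pt3) : ℝ :=
  piBracket (AxmC a d) (BmmC a d) f h z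

/-- `ω = A_g M = A M + d g⁻² (x, A M) A x` -/
def omC (a : Fin 3 → ℝ) (d : ℝ) (z : Pt3) : Fin 3 → ℝ := fun i =>
  a i * z.2 i + d / (gC a d z.1) ^ 2 * dot z.1 (fun j => a j * z.2 j) * (a i * z.1 i)

/-- the Chaplygin vector field `Z(x,M) = (x × ω, M × ω)` -/
def Zch (a : Fin 3 → ℝ) (d : ℝ) (z : Pt3) : Pt3 :=
  (cross z.1 (omC a d z), cross z.2 (omC a d z))

-- auxiliary
def Qf (a : Fin 3 → ℝ) (d : ℝ) (x : Fin 3 → ℝ) : ℝ :=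
  1 - d * (x 0 * (a 0 * x 0) + x 1 * (a 1 * x 1) + x 2 * (a 2 * x 2))

def Sf (a : Fin 3 → ℝ) (z : Pt3) : ℝ :=
  z.1 0 * (a 0 * z.2 0) + z.1 1 * (a 1 * z.2 1) + z.1 2 * (a 2 * z.2 2)

def OmE (a : Fin 3 → ℝ) (d : ℝ) (k : Fin 3) (w : Pt3) : ℝ :=
  a k * w.2 k + d * (Real.sqrt (Qf a d w.1) * Real.sqrt (Qf a d w.1))⁻¹ * Sf a w * (a k * w.1 k)

lemma cross0 (u v : Fin 3 → ℝ) : cross u v 0 = u 1 * v 2 - u 2 * v 1 := by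
  simp [cross, eps, Fin.sum_univ_three]; norm_num; ring

lemma cross1 (u v : Fin 3 → ℝ) : cross u v 1 = u 2 * v 0 - u 0 * v 2 := by
  simp [cross, eps, Fin.sum_univ_three]; norm_num; ring

lemma cross2 (u v : Fin 3 → ℝ) : cross u v 2 = u 0 * v 1 - u 1 * v 0 := by
  simp [cross, eps, Fin.sum_univ_three]; norm_num; ring

lemma gC_eq (a : Fin 3 → ℝ) (d : ℝ) (x : Fin 3 → ℝ) :
    gC a d x = Real.sqrt (Qf a d x) := by
  simp [gC, dot, Fin.sum_univ_three, Qf]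

lemma omC_eq (a : Fin 3 → ℝ) (d : ℝ) (w : Pt3) (k : Fin 3) :
    omC a d w k = OmE a d k w := by
  simp only [omC, OmE, gC_eq, dot, Fin.sum_univ_three, Sf]
  rw [pow_two]
  ring


set_option maxHeartbeats 2000000 in
/-- the Chaplygin vector field has the invariant measure `g⁻¹ dx dM`. -/
theorem chaplygin_invariant_measure (a : Fin 3 → ℝ) (d : ℝ) :
    ∀ z : Pt3, z ∈ Uset a d →
      (∑ i, (dx (fun w => (gC a d w.1)⁻¹ * cross w.1 (omC a d w) i) i z
        + dM (fun w => (gC a d w.1)⁻¹ * cross w.2 (omC a d w) i) i z)) = 0 := by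
  intro z hz
  have hQ : 0 < Qf a d z.1 := by
    simpa [Uset, dot, Fin.sum_univ_three, Qf] using hz
  have hne : Real.sqrt (Qf a d z.1) ≠ 0 := (Real.sqrt_pos.mpr hQ).ne'
  have hx : ∀ j : Fin 3, HasFDerivAt (fun w : Pt3 => w.1 j)
      ((ContinuousLinearMap.proj j).comp (ContinuousLinearMap.fst ℝ (Fin 3 → ℝ) (Fin 3 → ℝ))) z :=
    fun j => ((ContinuousLinearMap.proj j).comp (ContinuousLinearMap.fst ℝ (Fin 3 → ℝ) (Fin 3 → ℝ))).hasFDerivAt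
  have hM : ∀ j : Fin 3, HasFDerivAt (fun w : Pt3 => w.2 j)
      ((ContinuousLinearMap.proj j).comp (ContinuousLinearMap.snd ℝ (Fin 3 → ℝ) (Fin 3 → ℝ))) z :=
    fun j => ((ContinuousLinearMap.proj j).comp (ContinuousLinearMap.snd ℝ (Fin 3 → ℝ) (Fin 3 → ℝ))).hasFDerivAt
  have hQx : HasFDerivAt (fun w : Pt3 => Qf a d w.1) _ z :=
    (((((hx 0).mul ((hx 0).const_mul (a 0))).add ((hx 1).mul ((hx 1).const_mul (a 1)))).add
      ((hx 2).mul ((hx 2).const_mul (a 2)))).const_mul d).const_sub 1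
  have hg : HasFDerivAt (fun w : Pt3 => Real.sqrt (Qf a d w.1)) _ z := hQx.sqrt hQ.ne'
  have hginv : HasFDerivAt (fun w : Pt3 => (Real.sqrt (Qf a d w.1))⁻¹) _ z :=
    (hasDerivAt_inv hne).comp_hasFDerivAt z hg
  have hg2inv : HasFDerivAt
      (fun w : Pt3 => (Real.sqrt (Qf a d w.1) * Real.sqrt (Qf a d w.1))⁻¹) _ z :=
    (hasDerivAt_inv (mul_ne_zero hne hne)).comp_hasFDerivAt z (hg.mul hg)
  have hS : HasFDerivAt (fun w : Pt3 => Sf a w) _ z :=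
    (((hx 0).mul ((hM 0).const_mul (a 0))).add ((hx 1).mul ((hM 1).const_mul (a 1)))).add
      ((hx 2).mul ((hM 2).const_mul (a 2)))
  have hOm : ∀ k : Fin 3, HasFDerivAt (fun w : Pt3 => OmE a d k w)
      (((a k) • ((ContinuousLinearMap.proj k).comp (ContinuousLinearMap.snd ℝ (Fin 3 → ℝ) (Fin 3 → ℝ)))) + _) z :=
    fun k => ((hM k).const_mul (a k)).add
      (((hg2inv.const_mul d).mul hS).mul ((hx k).const_mul (a k)))
  have HF0 : HasFDerivAt (fun w : Pt3 =>
      (Real.sqrt (Qf a d w.1))⁻¹ * (w.1 1 * OmE a d 2 w - w.1 2 * OmE a d 1 w)) _ z :=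
    hginv.mul (((hx 1).mul (hOm 2)).sub ((hx 2).mul (hOm 1)))
  have HF1 : HasFDerivAt (fun w : Pt3 =>
      (Real.sqrt (Qf a d w.1))⁻¹ * (w.1 2 * OmE a d 0 w - w.1 0 * OmE a d 2 w)) _ z :=
    hginv.mul (((hx 2).mul (hOm 0)).sub ((hx 0).mul (hOm 2)))
  have HF2 : HasFDerivAt (fun w : Pt3 =>
      (Real.sqrt (Qf a d w.1))⁻¹ * (w.1 0 * OmE a d 1 w - w.1 1 * OmE a d 0 w)) _ z :=
    hginv.mul (((hx 0).mul (hOm 1)).sub ((hx 1).mul (hOm 0)))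
  have HM0 : HasFDerivAt (fun w : Pt3 =>
      (Real.sqrt (Qf a d w.1))⁻¹ * (w.2 1 * OmE a d 2 w - w.2 2 * OmE a d 1 w)) _ z :=
    hginv.mul (((hM 1).mul (hOm 2)).sub ((hM 2).mul (hOm 1)))
  have HM1 : HasFDerivAt (fun w : Pt3 =>
      (Real.sqrt (Qf a d w.1))⁻¹ * (w.2 2 * OmE a d 0 w - w.2 0 * OmE a d 2 w)) _ z :=
    hginv.mul (((hM 2).mul (hOm 0)).sub ((hM 0).mul (hOm 2)))
  have HM2 : HasFDerivAt (fun w : Pt3 =>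
      (Real.sqrt (Qf a d w.1))⁻¹ * (w.2 0 * OmE a d 1 w - w.2 1 * OmE a d 0 w)) _ z :=
    hginv.mul (((hM 0).mul (hOm 1)).sub ((hM 1).mul (hOm 0)))
  simp only [Fin.sum_univ_three, dx, dM, cross0, cross1, cross2, gC_eq, omC_eq]
  rw [HF0.fderiv, HF1.fderiv, HF2.fderiv, HM0.fderiv, HM1.fderiv, HM2.fderiv]
  simp only [ContinuousLinearMap.add_apply, ContinuousLinearMap.smul_apply,
    ContinuousLinearMap.sub_apply, ContinuousLinearMap.neg_apply,
    ContinuousLinearMap.comp_apply, ContinuousLinearMap.proj_apply,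
    ContinuousLinearMap.coe_fst', ContinuousLinearMap.coe_snd',
    Pi.single_apply, smul_eq_mul, Pi.zero_apply]
  norm_num [show (2:Fin 3) ≠ 0 by decide, show (1:Fin 3) ≠ 0 by decide,
    show (2:Fin 3) ≠ 1 by decide, show (0:Fin 3) ≠ 1 by decide,
    show (0:Fin 3) ≠ 2 by decide, show (1:Fin 3) ≠ 2 by decide, OmE]
  field_simp
  ring
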